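/- Let c ∈ ℝ², r > 0, and s > 0 with 3r ≤ s. Let Y := {c + (2r, 0), c − (2r, 0), c + (0, 2r), c − (0, 2r)}. Then the closed ball B(c, r + s) is contained in B(Y, s); equivalently, B(B(c, r), s) ⊆ B(Y, s). -/
import Mathlib


open MeasureTheory Set Metric Filter ENNReal

/-- The closed `s`-neighborhood of a set `A ⊆ ℝⁿ`. -/
noncomputable def closedNbhd {n : ℕ} (A : Set (EuclideanSpace ℝ (Fin n))) (s : ℝ) :
    Set (EuclideanSpace ℝ (Fin n)) :=
  {x | Metric.infDist x A ≤ s}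

/-- The point of `ℝ²` with coordinates `(a, b)`. -/
noncomputable def pt (a b : ℝ) : EuclideanSpace ℝ (Fin 2) :=
  (WithLp.equiv 2 (Fin 2 → ℝ)).symm ![a, b]

private lemma key_ineq (a b r s : ℝ) (hr : 0 < r) (hrs : 3 * r ≤ s) (hab : b ^ 2 ≤ a ^ 2)
    (h0 : 0 ≤ a) (h : a ^ 2 + b ^ 2 ≤ (r + s) ^ 2) : (a - 2 * r) ^ 2 + b ^ 2 ≤ s ^ 2 := by
  nlinarith [sq_nonneg (a - b), sq_nonneg (a + b), sq_nonneg (s - 3 * r),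
    mul_nonneg h0 hr.le, sq_nonneg (a - r - s), sq_nonneg (10 * a - 7 * (r + s))]

private lemma dist_two (x y : EuclideanSpace ℝ (Fin 2)) :
    dist x y = Real.sqrt ((x 0 - y 0) ^ 2 + (x 1 - y 1) ^ 2) := by
  rw [EuclideanSpace.dist_eq, Fin.sum_univ_two]
  norm_num [sq, Real.dist_eq, abs_mul_abs_self]

private lemma sqrt_le_of_sq (s u : ℝ) (hs : 0 ≤ s) (h : u ≤ s ^ 2) : Real.sqrt u ≤ s := by
  calc Real.sqrt u ≤ Real.sqrt (s ^ 2) := Real.sqrt_le_sqrt h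
    _ = s := Real.sqrt_sq hs

/-- Four `s`-balls centered at the points displaced by `2r` from `c` in the coordinate
directions cover the `(r + s)`-ball: `B(c, r + s) ⊆ B(Y, s)`; equivalently
`B(B(c, r), s) ⊆ B(Y, s)`. -/
theorem spoke_cover
    (c : EuclideanSpace ℝ (Fin 2)) (r s : ℝ) (hr : 0 < r) (hs : 0 < s)
    (hrs : 3 * r ≤ s)
    (Y : Set (EuclideanSpace ℝ (Fin 2)))
    (hY : Y = ({c + pt (2 * r) 0, c - pt (2 * r) 0, c + pt 0 (2 * r), c - pt 0 (2 * r)} :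
      Set (EuclideanSpace ℝ (Fin 2)))) :
    Metric.closedBall c (r + s) ⊆ closedNbhd Y s ∧
    closedNbhd (Metric.closedBall c r) s ⊆ closedNbhd Y s := by
  have hball : Metric.closedBall c (r + s) ⊆ closedNbhd Y s := by
    intro x hx
    rw [Metric.mem_closedBall] at hx
    set a := x 0 - c 0 with ha
    set b := x 1 - c 1 with hb
    have hxc : a ^ 2 + b ^ 2 ≤ (r + s) ^ 2 := by
      have h1 : Real.sqrt (a ^ 2 + b ^ 2) ≤ r + s := by rw [← dist_two]; exact hx
      have h2 : 0 ≤ a ^ 2 + b ^ 2 := by positivity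
      nlinarith [Real.sq_sqrt h2, Real.sqrt_nonneg (a ^ 2 + b ^ 2)]
    suffices h : ∃ p ∈ Y, dist x p ≤ s by
      obtain ⟨p, hp, hd⟩ := h
      exact le_trans (Metric.infDist_le_dist_of_mem hp) hd
    rcases le_total (b ^ 2) (a ^ 2) with hab | hab
    · rcases le_total 0 a with h0 | h0
      · refine ⟨c + pt (2 * r) 0, by rw [hY]; simp, ?_⟩
        have hc0 : (c + pt (2 * r) 0) 0 = c 0 + 2 * r := rfl
        have hc1 : (c + pt (2 * r) 0) 1 = c 1 + 0 := rfl
        have hk := key_ineq a b r s hr hrs hab h0 hxc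
        rw [dist_two, hc0, hc1]
        refine sqrt_le_of_sq _ _ hs.le ?_
        have e1 : x 0 = a + c 0 := by rw [ha]; ring
        have e2 : x 1 = b + c 1 := by rw [hb]; ring
        rw [e1, e2]; nlinarith [hk]
      · refine ⟨c - pt (2 * r) 0, by rw [hY]; simp, ?_⟩
        have hc0 : (c - pt (2 * r) 0) 0 = c 0 - 2 * r := rfl
        have hc1 : (c - pt (2 * r) 0) 1 = c 1 - 0 := rfl
        have hk := key_ineq (-a) b r s hr hrs (by nlinarith) (by linarith) (by nlinarith)
        rw [dist_two, hc0, hc1]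
        refine sqrt_le_of_sq _ _ hs.le ?_
        have e1 : x 0 = a + c 0 := by rw [ha]; ring
        have e2 : x 1 = b + c 1 := by rw [hb]; ring
        rw [e1, e2]; nlinarith [hk]
    · rcases le_total 0 b with h0 | h0
      · refine ⟨c + pt 0 (2 * r), by rw [hY]; simp, ?_⟩
        have hc0 : (c + pt 0 (2 * r)) 0 = c 0 + 0 := rfl
        have hc1 : (c + pt 0 (2 * r)) 1 = c 1 + 2 * r := rfl
        have hk := key_ineq b a r s hr hrs hab h0 (by nlinarith)
        rw [dist_two, hc0, hc1]
        refine sqrt_le_of_sq _ _ hs.le ?_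
        have e1 : x 0 = a + c 0 := by rw [ha]; ring
        have e2 : x 1 = b + c 1 := by rw [hb]; ring
        rw [e1, e2]; nlinarith [hk]
      · refine ⟨c - pt 0 (2 * r), by rw [hY]; simp, ?_⟩
        have hc0 : (c - pt 0 (2 * r)) 0 = c 0 - 0 := rfl
        have hc1 : (c - pt 0 (2 * r)) 1 = c 1 - 2 * r := rfl
        have hk := key_ineq (-b) a r s hr hrs (by nlinarith) (by linarith) (by nlinarith)
        rw [dist_two, hc0, hc1]
        refine sqrt_le_of_sq _ _ hs.le ?_
        have e1 : x 0 = a + c 0 := by rw [ha]; ring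
        have e2 : x 1 = b + c 1 := by rw [hb]; ring
        rw [e1, e2]; nlinarith [hk]
  refine ⟨hball, ?_⟩
  intro x hx
  have hne : (Metric.closedBall c r).Nonempty := ⟨c, by simp [hr.le]⟩
  have hlow : dist x c - r ≤ Metric.infDist x (Metric.closedBall c r) := by
    obtain ⟨y, hy, hdy⟩ := (isCompact_closedBall c r).exists_infDist_eq_dist hne x
    rw [Metric.mem_closedBall] at hy
    have h3 := dist_triangle x y c
    have h4 : dist y c ≤ r := hy
    rw [hdy]
    linarith
  have hx' : Metric.infDist x (Metric.closedBall c r) ≤ s := hx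
  exact hball (by rw [Metric.mem_closedBall]; linarith)
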